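/- (Lemma: inference error vs. training error, quantitative version.) Let (Y,X) with pmf P and (Ỹ,X̃) with pmf P̃ be jointly distributed on the same finite sets 𝒴 × 𝒳, with P̃_{X̃}(x) > 0 whenever P_X(x) > 0, and suppose |L(y,a)| ≤ M for all y and a. If D_{χ²}(P_{Y|X=x} || P̃_{Ỹ|X̃=x}) ≤ β² for every x with P_X(x) > 0, then H_L(Y|X) ≤ H_L(Y; Ỹ | X) ≤ H_L(Y|X) + 2Mβ. -/

import Mathlib

open Finset

open Classical in
/-- Probability of an event under a pmf `p` on a finite sample space. -/
noncomputable def pr {Ω : Type*} [Fintype Ω] (p : Ω → ℝ) (E : Ω → Prop) : ℝ :=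
  ∑ ω, if E ω then p ω else 0

/-- Conditional distribution of a random variable `Y` given an event `E`. -/
noncomputable def condDist {Ω 𝒴 : Type*} [Fintype Ω] (p : Ω → ℝ) (Y : Ω → 𝒴)
    (E : Ω → Prop) : 𝒴 → ℝ :=
  fun y => pr p (fun ω => Y ω = y ∧ E ω) / pr p E

/-- Neyman's χ²-divergence `D_{χ²}(P‖Q)`.  (In Lean, `x / 0 = 0`, which realizes
the convention `0²/0 = 0` under absolute continuity.) -/
noncomputable def chiSqDiv {𝒴 : Type*} [Fintype 𝒴] (P Q : 𝒴 → ℝ) : ℝ :=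
  ∑ y, (P y - Q y) ^ 2 / Q y

/-- Expected loss `E_{Y∼P}[L(Y,a)]`. -/
noncomputable def expLoss {𝒴 𝒜 : Type*} [Fintype 𝒴] (L : 𝒴 → 𝒜 → ℝ) (P : 𝒴 → ℝ)
    (a : 𝒜) : ℝ :=
  ∑ y, P y * L y a

/-- The `L`-entropy `H_L(P) = min_{a∈𝒜} E_{Y∼P}[L(Y,a)]`. -/
noncomputable def Lentropy {𝒴 𝒜 : Type*} [Fintype 𝒴] (L : 𝒴 → 𝒜 → ℝ) (P : 𝒴 → ℝ) : ℝ :=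
  ⨅ a : 𝒜, expLoss L P a

/-- The `L`-conditional entropy `H_L(Y|X) = Σ_x P_X(x) H_L(P_{Y|X=x})`. -/
noncomputable def LcondEntropy {Ω 𝒳 𝒴 𝒜 : Type*} [Fintype Ω] [Fintype 𝒳] [Fintype 𝒴]
    (L : 𝒴 → 𝒜 → ℝ) (p : Ω → ℝ) (Y : Ω → 𝒴) (X : Ω → 𝒳) : ℝ :=
  ∑ x, pr p (fun ω => X ω = x) * Lentropy L (condDist p Y (fun ω => X ω = x))

/-- `b` selects, for every probability mass function `P` on `𝒴`, a Bayes action `b P`. -/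
def IsBayesSelector {𝒴 𝒜 : Type*} [Fintype 𝒴] (L : 𝒴 → 𝒜 → ℝ) (b : (𝒴 → ℝ) → 𝒜) : Prop :=
  ∀ P : 𝒴 → ℝ, (∀ y, 0 ≤ P y) → (∑ y, P y) = 1 →
    ∀ a : 𝒜, expLoss L P (b P) ≤ expLoss L P a

/-- The `L`-divergence `D_L(P‖Q) = E_{Y∼P}[L(Y,a_Q)] − E_{Y∼P}[L(Y,a_P)]`
for the choice `a_P = b P`, `a_Q = b Q` of Bayes actions. -/
noncomputable def Ldiv {𝒴 𝒜 : Type*} [Fintype 𝒴] (L : 𝒴 → 𝒜 → ℝ) (b : (𝒴 → ℝ) → 𝒜)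
    (P Q : 𝒴 → ℝ) : ℝ :=
  expLoss L P (b Q) - expLoss L P (b P)

/-- The `L`-conditional cross entropy
`H_L(Y;Ỹ|X) = Σ_x P_X(x) E_{Y∼P_{Y|X=x}}[L(Y, a_{P̃_{Ỹ|X̃=x}})]`. -/
noncomputable def LcrossEntropy {Ω Ω' 𝒳 𝒴 𝒜 : Type*} [Fintype Ω] [Fintype Ω']
    [Fintype 𝒳] [Fintype 𝒴] (L : 𝒴 → 𝒜 → ℝ) (b : (𝒴 → ℝ) → 𝒜)
    (p : Ω → ℝ) (Y : Ω → 𝒴) (X : Ω → 𝒳)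
    (p' : Ω' → ℝ) (Y' : Ω' → 𝒴) (X' : Ω' → 𝒳) : ℝ :=
  ∑ x, pr p (fun ω => X ω = x) *
    expLoss L (condDist p Y (fun ω => X ω = x))
      (b (condDist p' Y' (fun ω => X' ω = x)))

section Aux

open Classical

lemma pr_nonneg {Ω : Type*} [Fintype Ω] (p : Ω → ℝ) (hp : ∀ ω, 0 ≤ p ω) (E : Ω → Prop) :
    0 ≤ pr p E := by
  classical
  refine Finset.sum_nonneg fun ω _ => ?_
  split <;> simp [hp ω]

lemma sum_pr_eq {Ω 𝒴 : Type*} [Fintype Ω] [Fintype 𝒴] (p : Ω → ℝ) (Y : Ω → 𝒴)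
    (E : Ω → Prop) : ∑ y, pr p (fun ω => Y ω = y ∧ E ω) = pr p E := by
  classical
  unfold pr
  rw [Finset.sum_comm]
  refine Finset.sum_congr rfl fun ω _ => ?_
  by_cases hE : E ω
  · simp [hE]
  · simp [hE]

lemma sum_pr_fiber {Ω 𝒳 : Type*} [Fintype Ω] [Fintype 𝒳] (p : Ω → ℝ) (X : Ω → 𝒳) :
    ∑ x, pr p (fun ω => X ω = x) = ∑ ω, p ω := by
  classical
  unfold pr
  rw [Finset.sum_comm]
  simp

lemma condDist_nonneg {Ω 𝒴 : Type*} [Fintype Ω] (p : Ω → ℝ) (hp : ∀ ω, 0 ≤ p ω)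
    (Y : Ω → 𝒴) (E : Ω → Prop) (y : 𝒴) : 0 ≤ condDist p Y E y := by
  unfold condDist
  exact div_nonneg (pr_nonneg p hp _) (pr_nonneg p hp _)

lemma condDist_sum {Ω 𝒴 : Type*} [Fintype Ω] [Fintype 𝒴] (p : Ω → ℝ)
    (Y : Ω → 𝒴) (E : Ω → Prop) (hE : pr p E ≠ 0) :
    ∑ y, condDist p Y E y = 1 := by
  unfold condDist
  rw [← Finset.sum_div, sum_pr_eq, div_self hE]

lemma Lentropy_le {𝒴 𝒜 : Type*} [Fintype 𝒴] [Fintype 𝒜] [Nonempty 𝒜]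
    (L : 𝒴 → 𝒜 → ℝ) (P : 𝒴 → ℝ) (a : 𝒜) : Lentropy L P ≤ expLoss L P a :=
  ciInf_le (Set.Finite.bddBelow (Set.finite_range _)) a

lemma Lentropy_eq {𝒴 𝒜 : Type*} [Fintype 𝒴] [Fintype 𝒜] [Nonempty 𝒜]
    (L : 𝒴 → 𝒜 → ℝ) (b : (𝒴 → ℝ) → 𝒜) (hb : IsBayesSelector L b)
    (P : 𝒴 → ℝ) (h0 : ∀ y, 0 ≤ P y) (h1 : ∑ y, P y = 1) :
    Lentropy L P = expLoss L P (b P) :=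
  le_antisymm (Lentropy_le L P _) (le_ciInf fun a => hb P h0 h1 a)

/-- Key Cauchy–Schwarz estimate. -/
lemma expLoss_diff_le {𝒴 𝒜 : Type*} [Fintype 𝒴] (L : 𝒴 → 𝒜 → ℝ) (M : ℝ) (hM : 0 ≤ M)
    (hL : ∀ y a, |L y a| ≤ M) (P Q : 𝒴 → ℝ)
    (hQ0 : ∀ y, 0 ≤ Q y) (hQ1 : ∑ y, Q y = 1)
    (hac : ∀ y, Q y = 0 → P y = 0)
    (β : ℝ) (hβ : 0 ≤ β) (hchi : chiSqDiv P Q ≤ β ^ 2) (a : 𝒜) :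
    |expLoss L P a - expLoss L Q a| ≤ M * β := by
  classical
  set f : 𝒴 → ℝ := fun y => (P y - Q y) / Real.sqrt (Q y) with hf
  set g : 𝒴 → ℝ := fun y => Real.sqrt (Q y) * L y a with hg
  have hdiff : expLoss L P a - expLoss L Q a = ∑ y, f y * g y := by
    unfold expLoss
    rw [← Finset.sum_sub_distrib]
    refine Finset.sum_congr rfl fun y _ => ?_
    by_cases hq : Q y = 0
    · simp [hf, hg, hq, hac y hq]
    · have hs : Real.sqrt (Q y) ≠ 0 :=
        (Real.sqrt_pos.mpr (lt_of_le_of_ne (hQ0 y) (Ne.symm hq))).ne'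
      field_simp [hf, hg]
      simp only [hf, hg]
      rw [div_mul_eq_mul_div, mul_comm (Real.sqrt (Q y)) (L y a), ← mul_assoc, mul_div_assoc, div_self hs, mul_one]
      ring
  have hfsq : ∑ y, f y ^ 2 = chiSqDiv P Q := by
    unfold chiSqDiv
    refine Finset.sum_congr rfl fun y _ => ?_
    by_cases hq : Q y = 0
    · simp [hf, hq, hac y hq]
    · rw [hf, div_pow, Real.sq_sqrt (hQ0 y)]
  have hgsq : ∑ y, g y ^ 2 ≤ M ^ 2 := by
    calc ∑ y, g y ^ 2 ≤ ∑ y, Q y * M ^ 2 := by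
          refine Finset.sum_le_sum fun y _ => ?_
          rw [hg, mul_pow, Real.sq_sqrt (hQ0 y)]
          refine mul_le_mul_of_nonneg_left ?_ (hQ0 y)
          calc L y a ^ 2 = |L y a| ^ 2 := (sq_abs _).symm
            _ ≤ M ^ 2 := by
                exact pow_le_pow_left₀ (abs_nonneg _) (hL y a) 2
      _ = M ^ 2 := by rw [← Finset.sum_mul, hQ1, one_mul]
  have hcs := Finset.sum_mul_sq_le_sq_mul_sq Finset.univ f g
  have hsq : (∑ y, f y * g y) ^ 2 ≤ (M * β) ^ 2 := by
    calc (∑ y, f y * g y) ^ 2 ≤ (∑ y, f y ^ 2) * ∑ y, g y ^ 2 := hcs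
      _ ≤ β ^ 2 * M ^ 2 := by
          refine mul_le_mul ?_ hgsq ?_ (sq_nonneg β)
          · rw [hfsq]; exact hchi
          · exact Finset.sum_nonneg fun y _ => sq_nonneg _
      _ = (M * β) ^ 2 := by ring
  rw [hdiff]
  calc |∑ y, f y * g y| = Real.sqrt ((∑ y, f y * g y) ^ 2) := (Real.sqrt_sq_eq_abs _).symm
    _ ≤ Real.sqrt ((M * β) ^ 2) := Real.sqrt_le_sqrt hsq
    _ = |M * β| := Real.sqrt_sq_eq_abs _
    _ = M * β := abs_of_nonneg (mul_nonneg hM hβ)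

end Aux

/-- inference error vs. training error, quantitative.
If `D_{χ²}(P_{Y|X=x} ‖ P̃_{Ỹ|X̃=x}) ≤ β²` for every `x` with `P_X(x) > 0`, then
`H_L(Y|X) ≤ H_L(Y;Ỹ|X) ≤ H_L(Y|X) + 2Mβ`. -/
theorem crossEntropy_close_to_condEntropy {Ω Ω' 𝒳 𝒴 𝒜 : Type*} [Fintype Ω] [Fintype Ω']
    [Fintype 𝒳] [Fintype 𝒴] [Fintype 𝒜] [Nonempty 𝒜]
    (L : 𝒴 → 𝒜 → ℝ) (M : ℝ) (hL : ∀ y a, |L y a| ≤ M)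
    (b : (𝒴 → ℝ) → 𝒜) (hb : IsBayesSelector L b)
    (p : Ω → ℝ) (hp : ∀ ω, 0 ≤ p ω) (hsum : ∑ ω, p ω = 1)
    (Y : Ω → 𝒴) (X : Ω → 𝒳)
    (p' : Ω' → ℝ) (hp' : ∀ ω, 0 ≤ p' ω) (hsum' : ∑ ω, p' ω = 1)
    (Y' : Ω' → 𝒴) (X' : Ω' → 𝒳)
    (hsupp : ∀ x, 0 < pr p (fun ω => X ω = x) → 0 < pr p' (fun ω => X' ω = x))
    (hac : ∀ x, 0 < pr p (fun ω => X ω = x) → ∀ y,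
      condDist p' Y' (fun ω => X' ω = x) y = 0 →
        condDist p Y (fun ω => X ω = x) y = 0)
    (β : ℝ) (hβ : 0 ≤ β)
    (hchi : ∀ x, 0 < pr p (fun ω => X ω = x) →
      chiSqDiv (condDist p Y (fun ω => X ω = x))
        (condDist p' Y' (fun ω => X' ω = x)) ≤ β ^ 2) :
    LcondEntropy L p Y X ≤ LcrossEntropy L b p Y X p' Y' X'
      ∧ LcrossEntropy L b p Y X p' Y' X' ≤ LcondEntropy L p Y X + 2 * M * β := by
    classical
  -- 𝒴 and Ω are nonempty, hence M ≥ 0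
  have hΩ : Nonempty Ω := by
    by_contra h
    rw [not_nonempty_iff] at h
    simp [Finset.univ_eq_empty] at hsum
  obtain ⟨ω0⟩ := hΩ
  have hM : 0 ≤ M := le_trans (abs_nonneg _) (hL (Y ω0) (Classical.arbitrary 𝒜))
  have hprx : ∀ x, 0 ≤ pr p (fun ω => X ω = x) := fun x => pr_nonneg p hp _
  constructor
  · unfold LcondEntropy LcrossEntropy
    refine Finset.sum_le_sum fun x _ => ?_
    exact mul_le_mul_of_nonneg_left (Lentropy_le L _ _) (hprx x)
  · have key : ∀ x, pr p (fun ω => X ω = x) *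
        expLoss L (condDist p Y (fun ω => X ω = x))
          (b (condDist p' Y' (fun ω => X' ω = x))) ≤
        pr p (fun ω => X ω = x) * Lentropy L (condDist p Y (fun ω => X ω = x)) +
        pr p (fun ω => X ω = x) * (2 * M * β) := by
      intro x
      rcases eq_or_lt_of_le (hprx x) with hx | hx
      · rw [← hx]; simp
      · have hx' := hsupp x hx
        set P := condDist p Y (fun ω => X ω = x) with hP
        set Q := condDist p' Y' (fun ω => X' ω = x) with hQ
        have hP0 : ∀ y, 0 ≤ P y := condDist_nonneg p hp Y _
        have hP1 : ∑ y, P y = 1 := condDist_sum p Y _ (ne_of_gt hx)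
        have hQ0 : ∀ y, 0 ≤ Q y := condDist_nonneg p' hp' Y' _
        have hQ1 : ∑ y, Q y = 1 := condDist_sum p' Y' _ (ne_of_gt hx')
        have hacx : ∀ y, Q y = 0 → P y = 0 := hac x hx
        have hd1 := expLoss_diff_le L M hM hL P Q hQ0 hQ1 hacx β hβ (hchi x hx) (b Q)
        have hd2 := expLoss_diff_le L M hM hL P Q hQ0 hQ1 hacx β hβ (hchi x hx) (b P)
        have h1 : expLoss L P (b Q) ≤ expLoss L Q (b Q) + M * β := by
          have := (abs_le.mp hd1).2; linarith
        have h2 : expLoss L Q (b Q) ≤ expLoss L Q (b P) := hb Q hQ0 hQ1 (b P)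
        have h3 : expLoss L Q (b P) ≤ expLoss L P (b P) + M * β := by
          have := (abs_le.mp hd2).1; linarith
        have h4 : expLoss L P (b P) = Lentropy L P :=
          (Lentropy_eq L b hb P hP0 hP1).symm
        have hfinal : expLoss L P (b Q) ≤ Lentropy L P + 2 * M * β := by linarith
        calc pr p (fun ω => X ω = x) * expLoss L P (b Q)
            ≤ pr p (fun ω => X ω = x) * (Lentropy L P + 2 * M * β) :=
              mul_le_mul_of_nonneg_left hfinal (hprx x)
          _ = pr p (fun ω => X ω = x) * Lentropy L P +
              pr p (fun ω => X ω = x) * (2 * M * β) := by ring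
    calc LcrossEntropy L b p Y X p' Y' X'
        ≤ ∑ x, (pr p (fun ω => X ω = x) * Lentropy L (condDist p Y (fun ω => X ω = x)) +
            pr p (fun ω => X ω = x) * (2 * M * β)) := Finset.sum_le_sum fun x _ => key x
      _ = LcondEntropy L p Y X + (∑ x, pr p (fun ω => X ω = x)) * (2 * M * β) := by
          rw [Finset.sum_add_distrib, ← Finset.sum_mul]; rfl
      _ = LcondEntropy L p Y X + 2 * M * β := by
          rw [sum_pr_fiber p X, hsum, one_mul]
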